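/- Let f be a non-degenerate integrable log-concave function on ℝⁿ and (f_m) a sequence of such functions converging to f in L¹. Then there exist t ∈ ℝ, ρ > 0, and m₀ such that for all m ≥ m₀ and all x ∈ ℝⁿ, f_m(x) ≤ exp(−‖x‖/ρ + t). -/

import Mathlib

open MeasureTheory Filter
noncomputable section

/-- `ℝⁿ` as a Euclidean space. -/
abbrev Euc (n : ℕ) := EuclideanSpace ℝ (Fin n)

/-- `f` is a non-degenerate, upper semicontinuous, integrable log-concave
function on `ℝⁿ` (the class `LC`): `f ≥ 0`, `f` is upper semicontinuous,
log-concave, integrable with `0 < ∫ f`, and the interior of its support is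
non-empty. -/
def IsLC {n : ℕ} (f : Euc n → ℝ) : Prop :=
  (∀ x, 0 ≤ f x) ∧ UpperSemicontinuous f ∧
  (∀ x y : Euc n, ∀ a b : ℝ, 0 ≤ a → 0 ≤ b → a + b = 1 →
      f x ^ a * f y ^ b ≤ f (a • x + b • y)) ∧
  Integrable f ∧ 0 < ∫ x, f x ∧ (interior (Function.support f)).Nonempty

open Set Pointwise

lemma piece_integral {n : ℕ} {g : Euc n → ℝ}
    (hg0 : ∀ x, 0 ≤ g x)
    (hlc : ∀ x y : Euc n, ∀ a b : ℝ, 0 ≤ a → 0 ≤ b → a + b = 1 →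
      g x ^ a * g y ^ b ≤ g (a • x + b • y))
    (hmeas : Measurable g) (hint : Integrable g)
    {r ε κ : ℝ} (hr : 0 < r) (hε : 0 < ε) (hκ : 0 < κ)
    (hK : ENNReal.ofReal κ ≤ volume {y : Euc n | y ∈ Metric.closedBall 0 r ∧ ε ≤ g y})
    (x : Euc n) {θ : ℝ} (hθ0 : 0 ≤ θ) (hθ1 : θ ≤ 1/2) :
    ∃ S : Set (Euc n), MeasurableSet S ∧
      (∀ y ∈ S, ∃ u, (u ∈ Metric.closedBall (0:Euc n) r ∧ ε ≤ g u) ∧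
        y = θ • x + (1-θ) • u) ∧
      g x ^ θ * ε ^ (1-θ) * ((2⁻¹:ℝ)^n * κ) ≤ ∫ y in S, g y := by
  set K : Set (Euc n) := {y : Euc n | y ∈ Metric.closedBall 0 r ∧ ε ≤ g y} with hKdef
  have hKm : MeasurableSet K :=
    (Metric.isClosed_closedBall.measurableSet).inter (hmeas measurableSet_Ici)
  have hKfin : volume K ≠ ⊤ :=
    (lt_of_le_of_lt (measure_mono (fun y hy => hy.1)) (measure_closedBall_lt_top)).ne
  have h1θ : (0:ℝ) < 1 - θ := by linarith
  set S : Set (Euc n) := (θ • x) +ᵥ ((1-θ) • K) with hSdef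
  have hSm : MeasurableSet S := by
    exact (hKm.const_smul_of_ne_zero (by exact_mod_cast h1θ.ne')).const_vadd _
  have hSchar : ∀ y ∈ S, ∃ u, (u ∈ Metric.closedBall (0:Euc n) r ∧ ε ≤ g u) ∧
      y = θ • x + (1-θ) • u := by
    rintro y ⟨z, ⟨u, hu, rfl⟩, rfl⟩
    exact ⟨u, hu, rfl⟩
  have hvolS : volume S = ENNReal.ofReal ((1-θ)^n) * volume K := by
    rw [hSdef, measure_vadd, Measure.addHaar_smul_of_nonneg volume h1θ.le,
      finrank_euclideanSpace_fin]
  have hSfin : volume S ≠ ⊤ := by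
    rw [hvolS]
    exact ENNReal.mul_ne_top ENNReal.ofReal_ne_top hKfin
  have hvolS' : ENNReal.ofReal ((2⁻¹:ℝ)^n * κ) ≤ volume S := by
    rw [hvolS]
    calc ENNReal.ofReal ((2⁻¹:ℝ)^n * κ)
        ≤ ENNReal.ofReal ((1-θ)^n * κ) := by
          apply ENNReal.ofReal_le_ofReal
          apply mul_le_mul_of_nonneg_right _ hκ.le
          apply pow_le_pow_left₀ (by norm_num) (by linarith)
      _ = ENNReal.ofReal ((1-θ)^n) * ENNReal.ofReal κ := by
          rw [ENNReal.ofReal_mul (by positivity)]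
      _ ≤ ENNReal.ofReal ((1-θ)^n) * volume K := by
          exact mul_le_mul_right hK _
  have htoReal : (2⁻¹:ℝ)^n * κ ≤ (volume S).toReal :=
    (ENNReal.ofReal_le_iff_le_toReal hSfin).mp hvolS'
  have hlow : ∀ y ∈ S, g x ^ θ * ε ^ (1-θ) ≤ g y := by
    intro y hy
    obtain ⟨u, ⟨hur, huε⟩, rfl⟩ := hSchar y hy
    calc g x ^ θ * ε ^ (1-θ) ≤ g x ^ θ * g u ^ (1-θ) := by
          apply mul_le_mul_of_nonneg_left _ (Real.rpow_nonneg (hg0 x) θ)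
          exact Real.rpow_le_rpow hε.le huε h1θ.le
      _ ≤ g (θ • x + (1-θ) • u) := hlc x u θ (1-θ) hθ0 h1θ.le (by ring)
  have hc0 : 0 ≤ g x ^ θ * ε ^ (1-θ) := mul_nonneg (Real.rpow_nonneg (hg0 x) _) (Real.rpow_nonneg hε.le _)
  refine ⟨S, hSm, hSchar, ?_⟩
  calc g x ^ θ * ε ^ (1-θ) * ((2⁻¹:ℝ)^n * κ)
      ≤ g x ^ θ * ε ^ (1-θ) * (volume S).toReal :=
        mul_le_mul_of_nonneg_left htoReal hc0
    _ ≤ ∫ y in S, g y :=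
        setIntegral_ge_of_const_le_real hSm hSfin hlow hint.integrableOn

lemma sup_bound {n : ℕ} {g : Euc n → ℝ}
    (hg0 : ∀ x, 0 ≤ g x)
    (hlc : ∀ x y : Euc n, ∀ a b : ℝ, 0 ≤ a → 0 ≤ b → a + b = 1 →
      g x ^ a * g y ^ b ≤ g (a • x + b • y))
    (hmeas : Measurable g) (hint : Integrable g)
    {r ε κ A : ℝ} (hr : 0 < r) (hε : 0 < ε) (hκ : 0 < κ)
    (hK : ENNReal.ofReal κ ≤ volume {y : Euc n | y ∈ Metric.closedBall 0 r ∧ ε ≤ g y})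
    (hA : ∫ x, g x ≤ A) :
    ∀ p, g p ≤ (A / ((2⁻¹:ℝ)^n * κ))^2 / ε := by
  intro p
  obtain ⟨S, hSm, -, hS⟩ := piece_integral hg0 hlc hmeas hint hr hε hκ hK p
    (θ := 2⁻¹) (by norm_num) (by norm_num)
  have h2 : (1 : ℝ) - 2⁻¹ = 2⁻¹ := by norm_num
  rw [h2] at hS
  have hSA : g p ^ (2⁻¹:ℝ) * ε ^ (2⁻¹:ℝ) * ((2⁻¹:ℝ)^n * κ) ≤ A := by
    refine hS.trans (le_trans ?_ hA)
    exact setIntegral_le_integral hint (Filter.Eventually.of_forall hg0)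
  have hcκ : (0:ℝ) < (2⁻¹:ℝ)^n * κ := by positivity
  have h1 : (g p * ε) ^ (2⁻¹:ℝ) ≤ A / ((2⁻¹:ℝ)^n * κ) := by
    rw [Real.mul_rpow (hg0 p) hε.le, le_div_iff₀ hcκ]
    exact hSA
  have hs : Real.sqrt (g p * ε) ≤ A / ((2⁻¹:ℝ)^n * κ) := by
    rw [Real.sqrt_eq_rpow]
    convert h1 using 2
    norm_num
  have h2' : g p * ε ≤ (A / ((2⁻¹:ℝ)^n * κ))^2 := by
    calc g p * ε = Real.sqrt (g p * ε) ^ 2 :=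
          (Real.sq_sqrt (mul_nonneg (hg0 p) hε.le)).symm
      _ ≤ (A / ((2⁻¹:ℝ)^n * κ))^2 :=
          pow_le_pow_left₀ (Real.sqrt_nonneg _) hs 2
  rw [le_div_iff₀ hε]
  exact h2'

lemma far_small {n : ℕ} {g : Euc n → ℝ}
    (hg0 : ∀ x, 0 ≤ g x)
    (hlc : ∀ x y : Euc n, ∀ a b : ℝ, 0 ≤ a → 0 ≤ b → a + b = 1 →
      g x ^ a * g y ^ b ≤ g (a • x + b • y))
    (hmeas : Measurable g) (hint : Integrable g)
    {r ε κ A : ℝ} (hr : 0 < r) (hε : 0 < ε) (hκ : 0 < κ)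
    (hK : ENNReal.ofReal κ ≤ volume {y : Euc n | y ∈ Metric.closedBall 0 r ∧ ε ≤ g y})
    (hA : ∫ x, g x ≤ A)
    (N : ℕ) (hN : A < N * ((2⁻¹:ℝ)^n * κ) * (ε/2))
    (x : Euc n) (hx : 2*N*(2*r+1) ≤ ‖x‖) :
    g x < ε/2 := by
  by_contra hcon
  push_neg at hcon
  have hA0 : 0 ≤ A := le_trans (integral_nonneg hg0) hA
  have hN1 : 1 ≤ N := by
    rcases Nat.eq_zero_or_pos N with h | h
    · rw [h] at hN; simp at hN; linarith
    · exact h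
  have hxpos : (0:ℝ) < ‖x‖ := by
    have : (0:ℝ) < 2*N*(2*r+1) := by
      have : (1:ℝ) ≤ N := by exact_mod_cast hN1
      nlinarith
    linarith
  -- the slabs
  set θ : ℕ → ℝ := fun j => j*(2*r+1)/‖x‖ with hθdef
  have hθ0 : ∀ j : ℕ, 0 ≤ θ j := fun j => by positivity
  have hθhalf : ∀ j < N, θ j ≤ 1/2 := by
    intro j hj
    have hj' : (j:ℝ) ≤ N := by exact_mod_cast hj.le
    rw [hθdef, div_le_iff₀ hxpos]
    nlinarith
  have key : ∀ j < N, ∃ S : Set (Euc n), MeasurableSet S ∧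
      (∀ y ∈ S, ∃ u, (u ∈ Metric.closedBall (0:Euc n) r ∧ ε ≤ g u) ∧
        y = θ j • x + (1 - θ j) • u) ∧
      (ε/2) * ((2⁻¹:ℝ)^n * κ) ≤ ∫ y in S, g y := by
    intro j hj
    obtain ⟨S, h1, h2, h3⟩ := piece_integral hg0 hlc hmeas hint hr hε hκ hK x
      (hθ0 j) (hθhalf j hj)
    refine ⟨S, h1, h2, le_trans ?_ h3⟩
    have hc : (ε/2) ≤ g x ^ θ j * ε ^ (1 - θ j) := by
      have e1 : (ε/2) = (ε/2) ^ θ j * (ε/2) ^ (1 - θ j) := by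
        rw [← Real.rpow_add (by linarith : (0:ℝ) < ε/2)]
        norm_num
      rw [e1]
      have h1θ : (0:ℝ) ≤ 1 - θ j := by linarith [hθhalf j hj]
      exact mul_le_mul (Real.rpow_le_rpow (by linarith) hcon (hθ0 j))
        (Real.rpow_le_rpow (by linarith) (by linarith) h1θ)
        (Real.rpow_nonneg (by linarith) _) (Real.rpow_nonneg (hg0 x) _)
    exact mul_le_mul_of_nonneg_right hc (by positivity)
  choose! S hSm hSchar hSint using key
  -- inner product separation
  have hip : ∀ j < N, ∀ y ∈ S j,
      |inner ℝ x y - θ j * ‖x‖^2| ≤ ‖x‖ * r := by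
    intro j hj y hy
    obtain ⟨u, ⟨hur, huε⟩, rfl⟩ := hSchar j hj y hy
    have hun : ‖u‖ ≤ r := by
      rwa [Metric.mem_closedBall, dist_zero_right] at hur
    have h1θ : 0 ≤ 1 - θ j := by linarith [hθhalf j hj]
    rw [inner_add_right, real_inner_smul_right, real_inner_smul_right,
      real_inner_self_eq_norm_sq]
    have : |inner ℝ x u| ≤ ‖x‖ * r := by
      refine le_trans (abs_real_inner_le_norm x u) ?_
      exact mul_le_mul_of_nonneg_left hun (norm_nonneg x)
    rw [add_sub_cancel_left]
    rw [abs_mul, abs_of_nonneg h1θ]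
    calc (1 - θ j) * |inner ℝ x u| ≤ 1 * (‖x‖ * r) := by
          apply mul_le_mul (by linarith [hθ0 j]) this (abs_nonneg _) (by norm_num)
      _ = ‖x‖ * r := one_mul _
  have hdisj : Set.Pairwise ↑(Finset.range N) (Function.onFun Disjoint S) := by
    intro i hi j hj hij
    simp only [Finset.coe_range, Set.mem_Iio] at hi hj
    rw [Function.onFun, Set.disjoint_left]
    intro y hyi hyj
    have h1 := hip i hi y hyi
    have h2 := hip j hj y hyj
    have hsep : |θ i * ‖x‖^2 - θ j * ‖x‖^2| ≤ 2 * (‖x‖ * r) := by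
      calc |θ i * ‖x‖^2 - θ j * ‖x‖^2|
          ≤ |inner ℝ x y - θ i * ‖x‖^2| + |inner ℝ x y - θ j * ‖x‖^2| := by
            rw [abs_sub_comm (θ i * ‖x‖^2)]
            exact (abs_sub _ _).trans_eq' (by ring_nf)
        _ ≤ 2 * (‖x‖ * r) := by linarith
    have hij' : (1:ℝ) ≤ |(i:ℝ) - j| := by
      have : (i:ℝ) ≠ j := by exact_mod_cast hij
      have := sub_ne_zero_of_ne this
      have h3 : |(i:ℝ) - (j:ℝ)| ≠ 0 := abs_ne_zero.mpr this
      -- integers with distance ≥ 1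
      rcases lt_or_gt_of_ne hij with h | h
      · have : (i:ℝ) + 1 ≤ j := by exact_mod_cast h
        rw [abs_sub_comm, abs_of_nonneg (by linarith)]; linarith
      · have : (j:ℝ) + 1 ≤ i := by exact_mod_cast h
        rw [abs_of_nonneg (by linarith)]; linarith
    have hexp : |θ i * ‖x‖^2 - θ j * ‖x‖^2| = |(i:ℝ) - j| * ((2*r+1) * ‖x‖) := by
      rw [hθdef]
      have : (i:ℝ)*(2*r+1)/‖x‖ * ‖x‖^2 - (j:ℝ)*(2*r+1)/‖x‖ * ‖x‖^2
          = ((i:ℝ) - j) * ((2*r+1) * ‖x‖) := by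
        field_simp
      rw [this, abs_mul, abs_of_nonneg (by positivity : (0:ℝ) ≤ (2*r+1) * ‖x‖)]
    rw [hexp] at hsep
    have : (2*r+1) * ‖x‖ ≤ 2 * (‖x‖ * r) := by
      calc (2*r+1) * ‖x‖ = 1 * ((2*r+1) * ‖x‖) := (one_mul _).symm
        _ ≤ |(i:ℝ) - j| * ((2*r+1) * ‖x‖) :=
            mul_le_mul_of_nonneg_right hij' (by positivity)
        _ ≤ 2 * (‖x‖ * r) := hsep
    nlinarith
  -- sum up
  have hsum : (N:ℝ) * ((ε/2) * ((2⁻¹:ℝ)^n * κ)) ≤ ∫ x, g x := by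
    have hUm : ∀ j ∈ Finset.range N, MeasurableSet (S j) := by
      intro j hj; exact hSm j (Finset.mem_range.mp hj)
    have hUi : ∀ j ∈ Finset.range N, IntegrableOn g (S j) := by
      intro j _; exact hint.integrableOn
    have heq := integral_biUnion_finset (Finset.range N) hUm hdisj hUi (f := g)
    calc (N:ℝ) * ((ε/2) * ((2⁻¹:ℝ)^n * κ))
        = ∑ _j ∈ Finset.range N, (ε/2) * ((2⁻¹:ℝ)^n * κ) := by
          rw [Finset.sum_const, Finset.card_range, nsmul_eq_mul]
      _ ≤ ∑ j ∈ Finset.range N, ∫ y in S j, g y := by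
          apply Finset.sum_le_sum
          intro j hj
          exact hSint j (Finset.mem_range.mp hj)
      _ = ∫ y in ⋃ j ∈ Finset.range N, S j, g y := heq.symm
      _ ≤ ∫ x, g x :=
          setIntegral_le_integral hint (Filter.Eventually.of_forall hg0)
  have : (N:ℝ) * ((ε/2) * ((2⁻¹:ℝ)^n * κ)) ≤ A := hsum.trans hA
  nlinarith [this, hN]

lemma exp_bound {n : ℕ} {g : Euc n → ℝ}
    (hg0 : ∀ x, 0 ≤ g x)
    (hlc : ∀ x y : Euc n, ∀ a b : ℝ, 0 ≤ a → 0 ≤ b → a + b = 1 →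
      g x ^ a * g y ^ b ≤ g (a • x + b • y))
    {r ε M R₀ : ℝ} (hr : 0 < r) (hε : 0 < ε) (hR₀ : 0 ≤ R₀)
    (u : Euc n) (hu : ‖u‖ ≤ r) (hgu : ε ≤ g u)
    (hM : ∀ p, g p ≤ M)
    (hfar : ∀ y : Euc n, R₀ ≤ ‖y‖ → g y ≤ ε/2) :
    ∀ x, g x ≤ Real.exp (-‖x‖ / ((R₀+2*r)/Real.log 2)
      + (Real.log M + (R₀+3*r)/((R₀+2*r)/Real.log 2))) := by
  have hlog2 : (0:ℝ) < Real.log 2 := Real.log_pos (by norm_num)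
  set t₁ : ℝ := R₀ + 2*r with ht₁
  have ht₁pos : 0 < t₁ := by positivity
  set ρ : ℝ := t₁ / Real.log 2 with hρ
  have hρpos : 0 < ρ := by positivity
  have hεM : ε ≤ M := hgu.trans (hM u)
  have hMpos : 0 < M := lt_of_lt_of_le hε hεM
  set t : ℝ := Real.log M + (R₀+3*r)/ρ with ht
  intro x
  rcases le_or_gt ‖x‖ (t₁ + r) with hx | hx
  · -- near case
    calc g x ≤ M := hM x
      _ = Real.exp (Real.log M) := (Real.exp_log hMpos).symm
      _ ≤ Real.exp (-‖x‖/ρ + t) := by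
          apply Real.exp_le_exp.mpr
          rw [ht]
          have hnd : -‖x‖/ρ = -(‖x‖/ρ) := neg_div _ _
          have : ‖x‖/ρ ≤ (R₀+3*r)/ρ := by gcongr; linarith
          linarith [this]
  · -- far case
    set T : ℝ := ‖x - u‖ with hT
    have hTlb : ‖x‖ - r ≤ T := by
      have := norm_sub_norm_le x u
      linarith [this, hu]
    have hTpos : t₁ < T := by linarith
    have hT0 : (0:ℝ) < T := ht₁pos.trans hTpos
    set a : ℝ := t₁ / T with ha
    have ha0 : 0 < a := div_pos ht₁pos hT0
    have ha1 : a < 1 := by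
      rw [ha, div_lt_one (by linarith)]
      exact hTpos
    set b : ℝ := 1 - a with hb
    have hb0 : 0 ≤ b := by linarith
    have hab : a + b = 1 := by rw [hb]; ring
    set w : Euc n := a • x + b • u with hw
    have hwnorm : R₀ ≤ ‖w‖ := by
      have hw2 : w = u + a • (x - u) := by
        rw [hw, hb]
        module
      have h1 : ‖a • (x - u)‖ = t₁ := by
        rw [norm_smul, Real.norm_eq_abs, abs_of_pos ha0, ha, ← hT,
          div_mul_cancel₀ _ hT0.ne']
      have h2 : ‖a • (x - u)‖ - ‖u‖ ≤ ‖w‖ := by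
        rw [hw2]
        have := norm_sub_le (u + a • (x - u)) u
        simp only [add_sub_cancel_left] at this
        linarith
      rw [h1] at h2
      linarith
    have hgw : g w ≤ ε/2 := hfar w hwnorm
    have hkey : g x ^ a * ε ^ b ≤ ε / 2 := by
      calc g x ^ a * ε ^ b ≤ g x ^ a * g u ^ b := by
            apply mul_le_mul_of_nonneg_left _ (Real.rpow_nonneg (hg0 x) a)
            exact Real.rpow_le_rpow hε.le hgu hb0
        _ ≤ g w := hlc x u a b ha0.le hb0 hab
        _ ≤ ε/2 := hgw
    have hεb : (0:ℝ) < ε ^ b := Real.rpow_pos_of_pos hε b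
    have hga : g x ^ a ≤ ε ^ a / 2 := by
      have h1 : g x ^ a ≤ (ε/2) / ε ^ b := by
        rw [le_div_iff₀ hεb]
        exact hkey
      have h2 : (ε/2) / ε ^ b = ε ^ a / 2 := by
        rw [eq_div_iff (by norm_num : (2:ℝ) ≠ 0)]
        rw [div_mul_eq_mul_div, div_eq_iff hεb.ne']
        rw [← Real.rpow_add hε, hab, Real.rpow_one]
        ring
      rwa [h2] at h1
    have hgx : g x ≤ ε / Real.exp (T/ρ) := by
      have h1 : g x = (g x ^ a) ^ a⁻¹ := (Real.rpow_rpow_inv (hg0 x) ha0.ne').symm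
      have h2 : (g x ^ a) ^ a⁻¹ ≤ (ε ^ a / 2) ^ a⁻¹ :=
        Real.rpow_le_rpow (Real.rpow_nonneg (hg0 x) a) hga (inv_nonneg.mpr ha0.le)
      have h3 : (ε ^ a / 2) ^ a⁻¹ = ε / (2:ℝ) ^ a⁻¹ := by
        rw [Real.div_rpow (Real.rpow_nonneg hε.le a) (by norm_num)]
        rw [Real.rpow_rpow_inv hε.le ha0.ne']
      have h4 : (2:ℝ) ^ a⁻¹ = Real.exp (T/ρ) := by
        rw [Real.rpow_def_of_pos (by norm_num : (0:ℝ) < 2)]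
        congr 1
        rw [ha, hρ]
        field_simp
      calc g x = (g x ^ a) ^ a⁻¹ := h1
        _ ≤ (ε ^ a / 2) ^ a⁻¹ := h2
        _ = ε / Real.exp (T/ρ) := by rw [h3, h4]
    calc g x ≤ ε / Real.exp (T/ρ) := hgx
      _ = Real.exp (Real.log ε - T/ρ) := by
          rw [Real.exp_sub, Real.exp_log hε]
      _ ≤ Real.exp (-‖x‖/ρ + t) := by
          apply Real.exp_le_exp.mpr
          rw [ht]
          have h6 : Real.log ε ≤ Real.log M := Real.log_le_log hε hεM
          have h7 : -(T/ρ) ≤ -((‖x‖ - r)/ρ) := by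
            apply neg_le_neg
            gcongr
          have h8 : -((‖x‖ - r)/ρ) = -‖x‖/ρ + r/ρ := by ring
          have h9 : r/ρ ≤ (R₀+3*r)/ρ := by gcongr <;> linarith
          linarith

theorem uniform_exponential_bound' (n : ℕ) (F : ℕ → Euc n → ℝ) (f : Euc n → ℝ)
    (hF : ∀ m, (∀ x, 0 ≤ F m x) ∧ UpperSemicontinuous (F m) ∧
      (∀ x y : Euc n, ∀ a b : ℝ, 0 ≤ a → 0 ≤ b → a + b = 1 →
        F m x ^ a * F m y ^ b ≤ F m (a • x + b • y)) ∧ Integrable (F m))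
    (hf0 : ∀ x, 0 ≤ f x) (hfusc : UpperSemicontinuous f) (hfint : Integrable f)
    (h0 : (0 : Euc n) ∈ interior (Function.support f))
    (hL1 : Tendsto (fun m => ∫ x, |F m x - f x|) atTop (nhds 0)) :
    ∃ t ρ : ℝ, 0 < ρ ∧ ∃ m₀ : ℕ, ∀ m ≥ m₀, ∀ x : Euc n,
      F m x ≤ Real.exp (-‖x‖ / ρ + t) := by
  have hfmeas : Measurable f := hfusc.measurable
  -- a closed ball inside the support
  obtain ⟨r', hr', hball⟩ := Metric.isOpen_iff.mp isOpen_interior 0 h0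
  set r : ℝ := r'/2 with hrdef
  have hr : 0 < r := by positivity
  set B : Set (Euc n) := Metric.closedBall (0:Euc n) r with hBdef
  have hBsupp : B ⊆ Function.support f :=
    fun y hy => interior_subset (hball (Metric.closedBall_subset_ball (by linarith) hy))
  have hfB : ∀ y ∈ B, 0 < f y := fun y hy => lt_of_le_of_ne (hf0 y) (Ne.symm (hBsupp hy))
  have hBpos : 0 < volume B := Metric.measure_closedBall_pos volume 0 hr
  have hBfin : volume B ≠ ⊤ := measure_closedBall_lt_top.ne
  -- level sets of f
  set C : ℕ → Set (Euc n) := fun k => {y | y ∈ B ∧ ((k:ℝ)+1)⁻¹ ≤ f y} with hCdef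
  have hCmono : Monotone C := by
    intro k l hkl y hy
    refine ⟨hy.1, le_trans ?_ hy.2⟩
    have hkl' : (k:ℝ) ≤ l := by exact_mod_cast hkl
    apply inv_anti₀ (by positivity)
    linarith
  have hCunion : ⋃ k, C k = B := by
    apply Set.Subset.antisymm
    · exact Set.iUnion_subset fun k y hy => hy.1
    · intro y hy
      obtain ⟨k, hk⟩ := exists_nat_gt (f y)⁻¹
      refine Set.mem_iUnion.mpr ⟨k, hy, ?_⟩
      have hfy := hfB y hy
      have h1 : (f y)⁻¹ < (k:ℝ)+1 := by linarith
      have := (inv_lt_comm₀ (by positivity) (by positivity : (0:ℝ) < (k:ℝ)+1)).mp h1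
      linarith
  have htend := tendsto_measure_iUnion_atTop (μ := volume) hCmono
  rw [hCunion] at htend
  have hhalf : volume B / 2 < volume B := ENNReal.half_lt_self hBpos.ne' hBfin
  obtain ⟨k, hk⟩ := (htend.eventually (lt_mem_nhds hhalf)).exists
  simp only [Function.comp] at hk
  set c : ℝ := ((k:ℝ)+1)⁻¹ with hcdef
  have hc : 0 < c := by positivity
  set ε : ℝ := c/2 with hεdef
  have hε : 0 < ε := by positivity
  set m₄ : ENNReal := volume B / 2 / 2 with hm₄def
  have hm₄fin : m₄ ≠ ⊤ := by
    simp only [hm₄def]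
    exact (ENNReal.div_lt_top (ENNReal.div_lt_top hBfin (by norm_num)).ne (by norm_num)).ne
  have hm₄ne : m₄ ≠ 0 := by
    simp [hm₄def, ENNReal.div_eq_zero_iff, hBpos.ne']
  set κ : ℝ := m₄.toReal with hκdef
  have hκ : 0 < κ := ENNReal.toReal_pos hm₄ne hm₄fin
  have hκm₄ : ENNReal.ofReal κ = m₄ := ENNReal.ofReal_toReal hm₄fin
  set A : ℝ := (∫ x, f x) + 1 with hAdef
  set δ : ℝ := min 1 (ε * κ) with hδdef
  have hδ : 0 < δ := lt_min one_pos (by positivity)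
  obtain ⟨m₀, hm₀⟩ := Metric.tendsto_atTop.mp hL1 δ hδ
  -- constants
  set N : ℕ := Nat.floor (A / (((2⁻¹:ℝ)^n * κ) * (ε/2))) + 1 with hNdef
  have hN : A < N * ((2⁻¹:ℝ)^n * κ) * (ε/2) := by
    have h1 : A / (((2⁻¹:ℝ)^n * κ) * (ε/2)) < N := by
      rw [hNdef]
      push_cast
      exact Nat.lt_floor_add_one _
    have h2 : (0:ℝ) < ((2⁻¹:ℝ)^n * κ) * (ε/2) := by positivity
    rw [div_lt_iff₀ h2] at h1
    calc A < N * (((2⁻¹:ℝ)^n * κ) * (ε/2)) := h1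
      _ = N * ((2⁻¹:ℝ)^n * κ) * (ε/2) := by ring
  set R₀ : ℝ := 2*N*(2*r+1) with hR₀def
  have hR₀ : 0 ≤ R₀ := by positivity
  set M : ℝ := (A / ((2⁻¹:ℝ)^n * κ))^2 / ε with hMdef
  refine ⟨Real.log M + (R₀+3*r)/((R₀+2*r)/Real.log 2), (R₀+2*r)/Real.log 2, ?_, m₀, ?_⟩
  · have : (0:ℝ) < Real.log 2 := Real.log_pos (by norm_num)
    positivity
  intro m hm
  obtain ⟨hg0, hgusc, hglc, hgint⟩ := hF m
  have hgmeas : Measurable (F m) := hgusc.measurable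
  have hdiffint : Integrable (fun x => |F m x - f x|) := (hgint.sub hfint).abs
  have hδm : ∫ x, |F m x - f x| < δ := by
    have := hm₀ m hm
    rw [Real.dist_eq, sub_zero] at this
    exact lt_of_le_of_lt (le_abs_self _) this
  -- integral bound
  have hA : ∫ x, F m x ≤ A := by
    have h1 : (∫ x, F m x) - ∫ x, f x ≤ ∫ x, |F m x - f x| := by
      rw [← integral_sub hgint hfint]
      exact integral_mono (hgint.sub hfint) hdiffint (fun x => le_abs_self _)
    rw [hAdef]
    have : δ ≤ 1 := min_le_left _ _
    linarith
  -- measure of the good level set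
  have hK : ENNReal.ofReal κ ≤ volume {y : Euc n | y ∈ Metric.closedBall 0 r ∧ ε ≤ F m y} := by
    set K : Set (Euc n) := {y : Euc n | y ∈ Metric.closedBall 0 r ∧ ε ≤ F m y} with hKdef
    set bad : Set (Euc n) := {y | y ∈ C k ∧ F m y < ε} with hbaddef
    have hbadm : MeasurableSet bad := by
      refine MeasurableSet.inter ?_ (hgmeas measurableSet_Iio)
      exact (Metric.isClosed_closedBall.measurableSet).inter (hfmeas measurableSet_Ici)
    have hbadB : bad ⊆ B := fun y hy => hy.1.1
    have hbadfin : volume bad ≠ ⊤ := (lt_of_le_of_lt (measure_mono hbadB) hBfin.lt_top).ne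
    have hbadlow : ∀ y ∈ bad, ε ≤ |F m y - f y| := by
      rintro y ⟨⟨-, hfy⟩, hgy⟩
      rw [abs_sub_comm]
      calc ε ≤ f y - F m y := by
            have : c ≤ f y := hfy
            rw [hεdef] at hgy ⊢
            linarith
        _ ≤ |f y - F m y| := le_abs_self _
    have hbadvol : volume bad ≤ m₄ := by
      have h1 : ε * (volume bad).toReal ≤ ∫ y in bad, |F m y - f y| :=
        setIntegral_ge_of_const_le_real hbadm hbadfin hbadlow hdiffint.integrableOn
      have h2 : ∫ y in bad, |F m y - f y| ≤ ∫ y, |F m y - f y| :=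
        setIntegral_le_integral hdiffint (Filter.Eventually.of_forall fun y => abs_nonneg _)
      have h3 : (volume bad).toReal ≤ κ := by
        have hδκ : δ ≤ ε * κ := min_le_right _ _
        nlinarith [hδm, h1, h2]
      rw [← hκm₄]
      exact (ENNReal.le_ofReal_iff_toReal_le hbadfin hκ.le).mpr h3
    have hsub : C k ⊆ K ∪ bad := by
      intro y hy
      rcases le_or_gt ε (F m y) with h | h
      · exact Or.inl ⟨hy.1, h⟩
      · exact Or.inr ⟨hy, h⟩
    have h5 : m₄ + m₄ ≤ volume K + m₄ := by
      calc m₄ + m₄ = volume B / 2 := ENNReal.add_halves _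
        _ ≤ volume (C k) := hk.le
        _ ≤ volume K + volume bad := le_trans (measure_mono hsub) (measure_union_le _ _)
        _ ≤ volume K + m₄ := add_le_add_right hbadvol _
    rw [hκm₄]
    exact (ENNReal.add_le_add_iff_right hm₄fin).mp h5
  -- apply the three lemmas
  have hM := sup_bound hg0 hglc hgmeas hgint hr hε hκ hK hA
  have hfar : ∀ y : Euc n, R₀ ≤ ‖y‖ → F m y ≤ ε/2 := by
    intro y hy
    exact (far_small hg0 hglc hgmeas hgint hr hε hκ hK hA N hN y (hR₀def ▸ hy)).le
  have hKne : Set.Nonempty {y : Euc n | y ∈ Metric.closedBall 0 r ∧ ε ≤ F m y} := by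
    apply nonempty_of_measure_ne_zero (μ := volume)
    intro h
    rw [h] at hK
    simp only [nonpos_iff_eq_zero, ENNReal.ofReal_eq_zero] at hK
    linarith
  obtain ⟨u, hur, hgu⟩ := hKne
  have hu : ‖u‖ ≤ r := by rwa [Metric.mem_closedBall, dist_zero_right] at hur
  exact exp_bound hg0 hglc hr hε hR₀ u hu hgu hM hfar


/-- a sequence in `LC` converging in `L¹` to `f ∈ LC` (with `0`
in the interior of the support of `f`) admits a uniform exponential upper
bound `f_m(x) ≤ exp(−‖x‖/ρ + t)` for all large `m`. -/
theorem uniform_exponential_bound (n : ℕ) (F : ℕ → Euc n → ℝ) (f : Euc n → ℝ)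
    (hF : ∀ m, IsLC (F m)) (hf : IsLC f)
    (h0 : (0 : Euc n) ∈ interior (Function.support f))
    (hL1 : Tendsto (fun m => ∫ x, |F m x - f x|) atTop (nhds 0)) :
    ∃ t ρ : ℝ, 0 < ρ ∧ ∃ m₀ : ℕ, ∀ m ≥ m₀, ∀ x : Euc n,
      F m x ≤ Real.exp (-‖x‖ / ρ + t) := by
  obtain ⟨hf0, hfusc, hflc, hfint, hfpos, hfne⟩ := hf
  exact uniform_exponential_bound' n F f
    (fun m => ⟨(hF m).1, (hF m).2.1, (hF m).2.2.1, (hF m).2.2.2.1⟩)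
    hf0 hfusc hfint h0 hL1
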